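/- arXiv:1511.02020 — 3 statements merged into one kernel-verified Lean document; each statement's English description precedes it below -/
import Mathlib

section
/- Let 0<p<∞ and let φ:ℝⁿ×(0,∞)→(0,∞) satisfy: (i) φ(y,s)s^{n/p} ≤ φ(x,r)r^{n/p} whenever ‖x−y‖_∞ ≤ r−s, and (ii) φ(x,r) ≤ φ(x,s) for all x and 0<s≤r. Then φ satisfies the compatibility condition: for all x,y ∈ ℝⁿ and r>0 with ‖x−y‖_∞ ≤ r, one has 3^{−n/p} φ(y,r) ≤ φ(x,r) ≤ 3^{n/p} φ(y,r). -/
open MeasureTheory ENNReal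

noncomputable section

/-- Euclidean space `ℝⁿ`. -/
abbrev En (n : ℕ) := EuclideanSpace ℝ (Fin n)

/-- The axis-parallel closed cube with center `c` and side length `ℓ`. -/
def cube (n : ℕ) (c : En n) (ℓ : ℝ) : Set (En n) :=
  {y | ∀ i, |y i - c i| ≤ ℓ / 2}

/-- The generalized Morrey quasinorm (with exponent `p`) of an `ℝ≥0∞`-valued function. -/
def morrey (n : ℕ) (p : ℝ) (φ : En n → ℝ → ℝ) (g : En n → ℝ≥0∞) : ℝ≥0∞ :=
  ⨆ (c : En n) (ℓ : ℝ) (_ : 0 < ℓ),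
    (ENNReal.ofReal (φ c ℓ))⁻¹ *
      ((ENNReal.ofReal (ℓ ^ n))⁻¹ * ∫⁻ y in cube n c ℓ, g y ^ p) ^ (1 / p)

/-- The generalized Morrey quasinorm of a real-valued function. -/
def morreyR (n : ℕ) (p : ℝ) (φ : En n → ℝ → ℝ) (f : En n → ℝ) : ℝ≥0∞ :=
  morrey n p φ (fun y => ENNReal.ofReal |f y|)

/-- The generalized Morrey quasinorm of a complex-valued function. -/
def morreyC (n : ℕ) (p : ℝ) (φ : En n → ℝ → ℝ) (f : En n → ℂ) : ℝ≥0∞ :=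
  morrey n p φ (fun y => ENNReal.ofReal ‖f y‖)

/-- The generalized Morrey norm with exponent `q : ℝ≥0∞` (allowing `q = ∞`). -/
def morreyL (n : ℕ) (q : ℝ≥0∞) (φ : En n → ℝ → ℝ) (f : En n → ℝ) : ℝ≥0∞ :=
  ⨆ (c : En n) (ℓ : ℝ) (_ : 0 < ℓ),
    (ENNReal.ofReal (φ c ℓ))⁻¹ * (ENNReal.ofReal (ℓ ^ n)) ^ (-(1 / q).toReal) *
      eLpNorm f q (volume.restrict (cube n c ℓ))

/-- The weak generalized Morrey quasinorm. -/
def wMorrey (n : ℕ) (p : ℝ) (φ : En n → ℝ → ℝ) (g : En n → ℝ≥0∞) : ℝ≥0∞ :=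
  ⨆ (T : ℝ) (_ : 0 < T),
    ENNReal.ofReal T *
      morrey n p φ ({y | ENNReal.ofReal T < g y}.indicator fun _ => 1)

/-- The class `𝒢_p`, with explicit almost-increasing constant `C`. -/
def GClassC (n : ℕ) (p : ℝ) (φ : En n → ℝ → ℝ) (C : ℝ) : Prop :=
  (∀ x r, 0 < r → 0 < φ x r) ∧
  (∀ x s r, 0 < s → s ≤ r → φ x r ≤ φ x s) ∧
  (1 ≤ C ∧ ∀ x s r, 0 < s → s ≤ r →
    φ x s * s ^ ((n : ℝ) / p) ≤ C * (φ x r * r ^ ((n : ℝ) / p)))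

/-- The class `𝒢_p`. -/
def GClass (n : ℕ) (p : ℝ) (φ : En n → ℝ → ℝ) : Prop :=
  ∃ C, GClassC n p φ C

/-- The `ℓ_q` norm of a sequence of extended nonnegative reals. -/
def lqNorm (q : ℝ≥0∞) (a : ℕ → ℝ≥0∞) : ℝ≥0∞ :=
  if q = ⊤ then ⨆ j, a j else (∑' j, a j ^ q.toReal) ^ (1 / q.toReal)

/-- The Hardy-Littlewood maximal function (over cubes). -/
def hlM (n : ℕ) (f : En n → ℝ) (x : En n) : ℝ≥0∞ :=
  ⨆ (c : En n) (ℓ : ℝ) (_ : 0 < ℓ) (_ : x ∈ cube n c ℓ),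
    (ENNReal.ofReal (ℓ ^ n))⁻¹ * ∫⁻ y in cube n c ℓ, ENNReal.ofReal |f y|

/-- `ℓ^∞` distance on `ℝⁿ`. -/
def linf (n : ℕ) (x y : En n) : ℝ := ⨆ i, |x i - y i|

/-- Tempered distributions on `ℝⁿ`. -/
abbrev TempDist (n : ℕ) := SchwartzMap (En n) ℝ →L[ℝ] ℝ

/-- The Schwartz seminorm quantity `p_N`. -/
def pN (n N : ℕ) (ψ : SchwartzMap (En n) ℝ) : ℝ≥0∞ :=
  ∑ m ∈ Finset.range (N + 1),
    ⨆ x : En n, ENNReal.ofReal ((1 + ‖x‖) ^ N * ‖iteratedFDeriv ℝ m (⇑ψ) x‖)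

/-- The grand maximal function of a tempered distribution. -/
def grandMax (n N : ℕ) (f : TempDist n) (x : En n) : ℝ≥0∞ :=
  ⨆ (ψ : SchwartzMap (En n) ℝ) (_ : pN n N ψ ≤ 1) (t : ℝ) (_ : 0 < t)
    (η : SchwartzMap (En n) ℝ) (_ : ∀ y, η y = (t ^ n)⁻¹ * ψ (t⁻¹ • (x - y))),
    ENNReal.ofReal |f η|

/-- The generalized Hardy-Morrey quasinorm, via the grand maximal function. -/
def hMorrey (n : ℕ) (p : ℝ) (φ : En n → ℝ → ℝ) (N : ℕ) (f : TempDist n) : ℝ≥0∞ :=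
  morrey n p φ (grandMax n N f)

/-- The heat maximal function `sup_{t>0} |e^{tΔ}f|` of a tempered distribution. -/
def heatMax (n : ℕ) (f : TempDist n) (x : En n) : ℝ≥0∞ :=
  ⨆ (t : ℝ) (_ : 0 < t) (η : SchwartzMap (En n) ℝ)
    (_ : ∀ y, η y = (4 * Real.pi * t) ^ (-(n : ℝ) / 2) *
      Real.exp (-‖x - y‖ ^ 2 / (4 * t))),
    ENNReal.ofReal |f η|

/-- The Peetre maximal function. -/
def peetreMax (n : ℕ) (r d : ℝ) (f : En n → ℂ) (x : En n) : ℝ≥0∞ :=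
  ⨆ y : En n, ENNReal.ofReal (‖f (x - y)‖ / (1 + d * ‖y‖ ^ ((n : ℝ) / r)))

/-- The (distributional) Fourier transform of `f` is supported in `Ω`. -/
def ftSupportedIn (n : ℕ) (f : En n → ℂ) (Ω : Set (En n)) : Prop :=
  ∀ ψ : SchwartzMap (En n) ℂ, Disjoint (tsupport ⇑ψ) Ω →
    ∫ x, f x * (SchwartzMap.fourierTransformCLM ℂ ψ) x = 0

theorem statement6 (n : ℕ) (hn : 0 < n) (p : ℝ) (hp : 0 < p)
    (φ : En n → ℝ → ℝ) (hφpos : ∀ x r, 0 < r → 0 < φ x r)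
    (hφ1 : ∀ x y r s, 0 < r → 0 < s → linf n x y ≤ r - s →
      φ y s * s ^ ((n : ℝ) / p) ≤ φ x r * r ^ ((n : ℝ) / p))
    (hφ2 : ∀ x s r, 0 < s → s ≤ r → φ x r ≤ φ x s) :
    ∀ (x y : En n) (r : ℝ), 0 < r → linf n x y ≤ r →
      (3 : ℝ) ^ (-(n : ℝ) / p) * φ y r ≤ φ x r ∧
      φ x r ≤ (3 : ℝ) ^ ((n : ℝ) / p) * φ y r := by
  have hnp : (0 : ℝ) ≤ (n : ℝ) / p := by positivity
  have hsymm : ∀ x y : En n, linf n x y = linf n y x := by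
    intro x y
    unfold linf
    congr 1
    ext i
    rw [abs_sub_comm]
  -- Key one-sided estimate
  have key : ∀ (x y : En n) (r : ℝ), 0 < r → linf n x y ≤ r →
      φ y r ≤ (3 : ℝ) ^ ((n : ℝ) / p) * φ x r := by
    intro x y r hr hd
    have h1 : φ y r * r ^ ((n : ℝ) / p) ≤ φ x (2 * r) * (2 * r) ^ ((n : ℝ) / p) :=
      hφ1 x y (2 * r) r (by linarith) hr (by linarith)
    have h2 : φ x (2 * r) ≤ φ x r := hφ2 x r (2 * r) hr (by linarith)
    have hrp : (0 : ℝ) < r ^ ((n : ℝ) / p) := Real.rpow_pos_of_pos hr _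
    have h2r : (2 * r) ^ ((n : ℝ) / p) = 2 ^ ((n : ℝ) / p) * r ^ ((n : ℝ) / p) :=
      Real.mul_rpow (by norm_num) hr.le
    have h23 : (2 : ℝ) ^ ((n : ℝ) / p) ≤ 3 ^ ((n : ℝ) / p) :=
      Real.rpow_le_rpow (by norm_num) (by norm_num) hnp
    have hφxr : 0 < φ x r := hφpos x r hr
    have h3 : φ y r * r ^ ((n : ℝ) / p) ≤
        (3 : ℝ) ^ ((n : ℝ) / p) * φ x r * r ^ ((n : ℝ) / p) := by
      calc φ y r * r ^ ((n : ℝ) / p) ≤ φ x (2 * r) * (2 * r) ^ ((n : ℝ) / p) := h1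
        _ ≤ φ x r * (2 ^ ((n : ℝ) / p) * r ^ ((n : ℝ) / p)) := by
            rw [h2r]
            exact mul_le_mul_of_nonneg_right h2 (by positivity)
        _ ≤ (3 : ℝ) ^ ((n : ℝ) / p) * φ x r * r ^ ((n : ℝ) / p) := by
            have : φ x r * 2 ^ ((n : ℝ) / p) ≤ φ x r * 3 ^ ((n : ℝ) / p) :=
              mul_le_mul_of_nonneg_left h23 hφxr.le
            nlinarith [hrp]
    exact le_of_mul_le_mul_right h3 hrp
  intro x y r hr hd
  have h3pos : (0 : ℝ) < 3 ^ ((n : ℝ) / p) := by positivity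
  have hxy : φ y r ≤ (3 : ℝ) ^ ((n : ℝ) / p) * φ x r := key x y r hr hd
  have hyx : φ x r ≤ (3 : ℝ) ^ ((n : ℝ) / p) * φ y r := by
    apply key y x r hr
    rw [hsymm]; exact hd
  constructor
  · have : (3 : ℝ) ^ (-(n : ℝ) / p) = ((3 : ℝ) ^ ((n : ℝ) / p))⁻¹ := by
      rw [← Real.rpow_neg (by norm_num)]
      ring_nf
    rw [this, inv_mul_le_iff₀ h3pos]
    linarith
  · exact hyx

end
end

section
/- Let 0<p<∞ and let φ ∈ 𝒢_p additionally satisfy φ(y,s)s^{n/p} ≤ φ(x,r)r^{n/p} whenever ‖x−y‖_∞ ≤ r−s. Then there is a constant C (depending only on n, p, and the constant in the 𝒢_p condition) such that for every cube Q ⊂ ℝⁿ, 1/φ(Q) ≤ ‖χ_Q‖_{𝓜_{p,φ}} ≤ C/φ(Q), where φ(Q) = φ(c(Q),ℓ(Q)). -/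
open MeasureTheory ENNReal

noncomputable section

lemma cube_eq (n : ℕ) (c : En n) (ℓ : ℝ) :
    cube n c ℓ = ((MeasurableEquiv.toLp 2 (Fin n → ℝ)).symm) ⁻¹'
      (Set.univ.pi fun i => Set.Icc (c i - ℓ/2) (c i + ℓ/2)) := by
  ext y
  simp only [cube, Set.mem_setOf_eq, Set.mem_preimage, Set.mem_pi, Set.mem_univ, true_implies,
    Set.mem_Icc, MeasurableEquiv.coe_toLp_symm, MeasurableEquiv.toLp_symm_apply]
  refine forall_congr' fun i => ?_
  rw [abs_le]
  constructor <;> intro h <;> constructor <;> linarith [h.1, h.2]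

lemma measurableSet_cube (n : ℕ) (c : En n) (ℓ : ℝ) : MeasurableSet (cube n c ℓ) := by
  rw [cube_eq]
  exact (MeasurableSet.univ_pi fun i => measurableSet_Icc).preimage (by measurability)

lemma volume_cube (n : ℕ) (c : En n) (ℓ : ℝ) (hℓ : 0 ≤ ℓ) :
    volume (cube n c ℓ) = ENNReal.ofReal (ℓ ^ n) := by
  rw [cube_eq, (EuclideanSpace.volume_preserving_symm_measurableEquiv_toLp (Fin n)).measure_preimage
      ((MeasurableSet.univ_pi fun i => measurableSet_Icc).nullMeasurableSet),
    volume_pi_pi]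
  have h1 : ∀ x : Fin n, c x + ℓ / 2 - (c x - ℓ / 2) = ℓ := fun x => by ring
  simp only [Real.volume_Icc, h1]
  rw [Finset.prod_const, ENNReal.ofReal_pow hℓ]
  simp

lemma volume_cube_inter_le (n : ℕ) (c c' : En n) (ℓ ℓ' : ℝ) (hℓ : 0 ≤ ℓ) (hℓ' : 0 ≤ ℓ') :
    volume (cube n c ℓ ∩ cube n c' ℓ') ≤ ENNReal.ofReal (min ℓ ℓ' ^ n) := by
  rw [cube_eq, cube_eq, ← Set.preimage_inter, ← Set.pi_inter_distrib,
    (EuclideanSpace.volume_preserving_symm_measurableEquiv_toLp (Fin n)).measure_preimage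
      ((MeasurableSet.univ_pi fun i => (measurableSet_Icc.inter measurableSet_Icc)).nullMeasurableSet),
    volume_pi_pi]
  rw [ENNReal.ofReal_pow (le_min hℓ hℓ')]
  calc ∏ i : Fin n, volume (Set.Icc (c i - ℓ/2) (c i + ℓ/2) ∩ Set.Icc (c' i - ℓ'/2) (c' i + ℓ'/2))
      ≤ ∏ _i : Fin n, ENNReal.ofReal (min ℓ ℓ') := by
        refine Finset.prod_le_prod' fun i _ => ?_
        rcases le_total ℓ ℓ' with h | h
        · rw [min_eq_left h]
          refine (measure_mono Set.inter_subset_left).trans ?_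
          rw [Real.volume_Icc]; apply ENNReal.ofReal_le_ofReal; linarith
        · rw [min_eq_right h]
          refine (measure_mono Set.inter_subset_right).trans ?_
          rw [Real.volume_Icc]; apply ENNReal.ofReal_le_ofReal; linarith
    _ = ENNReal.ofReal (min ℓ ℓ') ^ n := by rw [Finset.prod_const]; simp


lemma lintegral_cube_indicator (n : ℕ) (p : ℝ) (hp : 0 < p) (c c' : En n) (ℓ ℓ' : ℝ) :
    ∫⁻ y in cube n c' ℓ',
        (ENNReal.ofReal |((cube n c ℓ).indicator fun _ => (1 : ℝ)) y|) ^ p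
      = volume (cube n c ℓ ∩ cube n c' ℓ') := by
  have hfun : ∀ y, (ENNReal.ofReal |((cube n c ℓ).indicator fun _ => (1 : ℝ)) y|) ^ p
      = (cube n c ℓ).indicator (fun _ => (1 : ℝ≥0∞)) y := by
    intro y
    by_cases hy : y ∈ cube n c ℓ
    · simp [Set.indicator_of_mem, hy]
    · simp [Set.indicator_of_notMem, hy, ENNReal.zero_rpow_of_pos hp]
  simp_rw [hfun]
  rw [lintegral_indicator (measurableSet_cube n c ℓ), setLIntegral_one,
    Measure.restrict_apply (measurableSet_cube n c ℓ)]

theorem statement7 (n : ℕ) (hn : 0 < n) (p : ℝ) (hp : 0 < p) (Cg : ℝ) :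
    ∃ C : ℝ, 0 < C ∧
      ∀ φ : En n → ℝ → ℝ, GClassC n p φ Cg →
        (∀ x y r s, 0 < r → 0 < s → linf n x y ≤ r - s →
          φ y s * s ^ ((n : ℝ) / p) ≤ φ x r * r ^ ((n : ℝ) / p)) →
        ∀ (c : En n) (ℓ : ℝ), 0 < ℓ →
          (ENNReal.ofReal (φ c ℓ))⁻¹ ≤
              morreyR n p φ ((cube n c ℓ).indicator fun _ => (1 : ℝ)) ∧
            morreyR n p φ ((cube n c ℓ).indicator fun _ => (1 : ℝ)) ≤
              ENNReal.ofReal C * (ENNReal.ofReal (φ c ℓ))⁻¹ := by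
  have hnp : (0:ℝ) ≤ (n:ℝ)/p := by positivity
  refine ⟨2 ^ ((n:ℝ)/p), by positivity, ?_⟩
  rintro φ ⟨hpos, hmono, _⟩ htri c ℓ hℓ
  have hφ := hpos c ℓ hℓ
  have hint : ∀ (c' : En n) (ℓ' : ℝ),
      (∫⁻ y in cube n c' ℓ',
        (fun y => ENNReal.ofReal |((cube n c ℓ).indicator fun _ => (1 : ℝ)) y|) y ^ p)
      = volume (cube n c ℓ ∩ cube n c' ℓ') := fun c' ℓ' =>
    lintegral_cube_indicator n p hp c c' ℓ ℓ'
  constructor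
  · -- lower bound
    rw [morreyR, morrey]
    refine le_trans ?_ (le_iSup_of_le c (le_iSup_of_le ℓ (le_iSup_of_le hℓ le_rfl)))
    rw [hint c ℓ, Set.inter_self, volume_cube n c ℓ hℓ.le,
      ENNReal.inv_mul_cancel (by simp [ENNReal.ofReal_eq_zero]; positivity) ofReal_ne_top,
      ENNReal.one_rpow, mul_one]
  · -- upper bound
    rw [morreyR, morrey]
    refine iSup_le fun c' => iSup_le fun ℓ' => iSup_le fun hℓ' => ?_
    rw [hint c' ℓ']
    by_cases hne : (cube n c ℓ ∩ cube n c' ℓ').Nonempty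
    · obtain ⟨z, hz, hz'⟩ := hne
      have hφ' := hpos c' ℓ' hℓ'
      set m : ℝ := min ℓ ℓ' with hm
      have hm0 : 0 < m := lt_min hℓ hℓ'
      have hlinf : linf n c' c ≤ (ℓ + ℓ') / 2 := by
        refine Real.iSup_le (fun i => ?_) (by positivity)
        have h1 := hz i
        have h2 := hz' i
        rw [abs_sub_comm] at h2
        calc |c' i - c i| ≤ |c' i - z i| + |z i - c i| := abs_sub_le _ _ _
          _ ≤ ℓ' / 2 + ℓ / 2 := add_le_add h2 h1
          _ = (ℓ + ℓ') / 2 := by ring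
      have h2pos : (0:ℝ) < 2 ^ ((n:ℝ)/p) := by positivity
      have hLpos : (0:ℝ) < ℓ' ^ ((n:ℝ)/p) := Real.rpow_pos_of_pos hℓ' _
      have key : φ c ℓ * m ^ ((n:ℝ)/p) ≤ 2 ^ ((n:ℝ)/p) * (φ c' ℓ' * ℓ' ^ ((n:ℝ)/p)) := by
        rcases le_total ℓ ℓ' with h | h
        · have h1 := htri c' c (2*ℓ') ℓ (by linarith) hℓ (by linarith)
          have h2 : φ c' (2*ℓ') ≤ φ c' ℓ' := hmono c' ℓ' (2*ℓ') hℓ' (by linarith)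
          have h3 : (2*ℓ') ^ ((n:ℝ)/p) = 2 ^ ((n:ℝ)/p) * ℓ' ^ ((n:ℝ)/p) :=
            Real.mul_rpow (by norm_num) hℓ'.le
          rw [hm, min_eq_left h]
          calc φ c ℓ * ℓ ^ ((n:ℝ)/p) ≤ φ c' (2*ℓ') * (2*ℓ') ^ ((n:ℝ)/p) := h1
            _ = φ c' (2*ℓ') * (2 ^ ((n:ℝ)/p) * ℓ' ^ ((n:ℝ)/p)) := by rw [h3]
            _ ≤ φ c' ℓ' * (2 ^ ((n:ℝ)/p) * ℓ' ^ ((n:ℝ)/p)) :=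
              mul_le_mul_of_nonneg_right h2 (by positivity)
            _ = 2 ^ ((n:ℝ)/p) * (φ c' ℓ' * ℓ' ^ ((n:ℝ)/p)) := by ring
        · have h1 := htri c' c (2*ℓ) ℓ (by linarith) hℓ (by linarith)
          have h2 : φ c' (2*ℓ) ≤ φ c' ℓ' := hmono c' ℓ' (2*ℓ) hℓ' (by linarith)
          have h3 : (2*ℓ) ^ ((n:ℝ)/p) = 2 ^ ((n:ℝ)/p) * ℓ ^ ((n:ℝ)/p) :=
            Real.mul_rpow (by norm_num) hℓ.le
          have hl : (0:ℝ) < ℓ ^ ((n:ℝ)/p) := Real.rpow_pos_of_pos hℓ _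
          have h4 : φ c ℓ ≤ 2 ^ ((n:ℝ)/p) * φ c' ℓ' := by
            have h5 : φ c ℓ * ℓ ^ ((n:ℝ)/p) ≤ (2 ^ ((n:ℝ)/p) * φ c' ℓ') * ℓ ^ ((n:ℝ)/p) := by
              calc φ c ℓ * ℓ ^ ((n:ℝ)/p) ≤ φ c' (2*ℓ) * (2*ℓ) ^ ((n:ℝ)/p) := h1
                _ = (2 ^ ((n:ℝ)/p) * φ c' (2*ℓ)) * ℓ ^ ((n:ℝ)/p) := by rw [h3]; ring
                _ ≤ (2 ^ ((n:ℝ)/p) * φ c' ℓ') * ℓ ^ ((n:ℝ)/p) :=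
                  mul_le_mul_of_nonneg_right
                    (mul_le_mul_of_nonneg_left h2 h2pos.le) hl.le
            exact le_of_mul_le_mul_right h5 hl
          rw [hm, min_eq_right h]
          calc φ c ℓ * ℓ' ^ ((n:ℝ)/p) ≤ (2 ^ ((n:ℝ)/p) * φ c' ℓ') * ℓ' ^ ((n:ℝ)/p) :=
              mul_le_mul_of_nonneg_right h4 hLpos.le
            _ = 2 ^ ((n:ℝ)/p) * (φ c' ℓ' * ℓ' ^ ((n:ℝ)/p)) := by ring
      -- ENNReal chain
      have hV := volume_cube_inter_le n c c' ℓ ℓ' hℓ.le hℓ'.le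
      have hstep : (ENNReal.ofReal (φ c' ℓ'))⁻¹ *
          ((ENNReal.ofReal (ℓ' ^ n))⁻¹ * volume (cube n c ℓ ∩ cube n c' ℓ')) ^ (1/p)
          ≤ ENNReal.ofReal ((φ c' ℓ')⁻¹ * (m ^ n / ℓ' ^ n) ^ (1/p)) := by
        rw [ENNReal.ofReal_mul (by positivity), ← ENNReal.ofReal_inv_of_pos hφ']
        refine mul_le_mul_right ?_ _
        rw [← ENNReal.ofReal_rpow_of_nonneg (by positivity) (by positivity)]
        refine ENNReal.rpow_le_rpow ?_ (by positivity)
        calc (ENNReal.ofReal (ℓ' ^ n))⁻¹ * volume (cube n c ℓ ∩ cube n c' ℓ')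
            ≤ (ENNReal.ofReal (ℓ' ^ n))⁻¹ * ENNReal.ofReal (m ^ n) := mul_le_mul_right hV _
          _ = ENNReal.ofReal (m ^ n / ℓ' ^ n) := by
              rw [← ENNReal.ofReal_inv_of_pos (by positivity), ← ENNReal.ofReal_mul (by positivity)]
              congr 1
              rw [div_eq_mul_inv, mul_comm]
      refine hstep.trans ?_
      have hrw : ((m ^ n / ℓ' ^ n : ℝ)) ^ (1/p) = m ^ ((n:ℝ)/p) / ℓ' ^ ((n:ℝ)/p) := by
        rw [← div_pow, ← Real.rpow_natCast (m / ℓ') n, ← Real.rpow_mul (by positivity),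
          mul_one_div, Real.div_rpow hm0.le hℓ'.le]
      rw [hrw]
      have hreal : (φ c' ℓ')⁻¹ * (m ^ ((n:ℝ)/p) / ℓ' ^ ((n:ℝ)/p))
          ≤ 2 ^ ((n:ℝ)/p) * (φ c ℓ)⁻¹ := by
        have e1 : (φ c' ℓ')⁻¹ * (m ^ ((n:ℝ)/p) / ℓ' ^ ((n:ℝ)/p))
            = m ^ ((n:ℝ)/p) / (φ c' ℓ' * ℓ' ^ ((n:ℝ)/p)) := by
          field_simp
        have e2 : 2 ^ ((n:ℝ)/p) * (φ c ℓ)⁻¹ = 2 ^ ((n:ℝ)/p) / φ c ℓ :=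
          (div_eq_mul_inv _ _).symm
        rw [e1, e2, div_le_div_iff₀ (by positivity) hφ]
        nlinarith [key]
      calc ENNReal.ofReal ((φ c' ℓ')⁻¹ * (m ^ ((n:ℝ)/p) / ℓ' ^ ((n:ℝ)/p)))
          ≤ ENNReal.ofReal (2 ^ ((n:ℝ)/p) * (φ c ℓ)⁻¹) := ENNReal.ofReal_le_ofReal hreal
        _ = ENNReal.ofReal (2 ^ ((n:ℝ)/p)) * (ENNReal.ofReal (φ c ℓ))⁻¹ := by
            rw [ENNReal.ofReal_mul (by positivity), ENNReal.ofReal_inv_of_pos hφ]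
    · rw [Set.not_nonempty_iff_eq_empty] at hne
      rw [hne, measure_empty, mul_zero,
        ENNReal.zero_rpow_of_pos (by positivity : (0:ℝ) < 1/p), mul_zero]
      exact bot_le


end
end

section
/- Let 0<p≤1 and φ ∈ 𝒢_p. Then for every κ ∈ 𝒮(ℝⁿ) there exists a constant C = C(κ, n, p, φ) such that |⟨f, κ⟩| ≤ C ‖f‖_{H𝓜_{p,φ}} for all f ∈ H𝓜_{p,φ}(ℝⁿ); that is, H𝓜_{p,φ}(ℝⁿ) is continuously embedded into the space of tempered distributions. -/
open MeasureTheory ENNReal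

noncomputable section

section Aux

variable {E F : Type*} [NormedAddCommGroup E] [NormedSpace ℝ E]
  [NormedAddCommGroup F] [NormedSpace ℝ F]

/-- Iterated derivatives commute with translation. -/
lemma iteratedFDeriv_comp_const_add (f : E → F) (hf : ContDiff ℝ ((⊤ : ℕ∞) : WithTop ℕ∞) f) (c : E) (m : ℕ) :
    ∀ z : E, iteratedFDeriv ℝ m (fun w => f (c + w)) z = iteratedFDeriv ℝ m f (c + z) := by
  induction m with
  | zero => intro z; ext u; simp
  | succ m IH =>
    intro z
    have hg : (iteratedFDeriv ℝ m fun w => f (c + w)) = fun z => iteratedFDeriv ℝ m f (c + z) :=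
      funext IH
    rw [iteratedFDeriv_succ_eq_comp_left, iteratedFDeriv_succ_eq_comp_left]
    simp only [Function.comp_apply]
    congr 1
    rw [hg]
    have h1 : HasFDerivAt (fun z : E => c + z) (ContinuousLinearMap.id ℝ E) z := by
      simpa using (hasFDerivAt_id z).const_add c
    have h2 : HasFDerivAt (iteratedFDeriv ℝ m f)
        (fderiv ℝ (iteratedFDeriv ℝ m f) (c + z)) (c + z) :=
      ((hf.differentiable_iteratedFDeriv (mod_cast ENat.coe_lt_top m)) (c + z)).hasFDerivAt
    have h3 := (h2.comp z h1).fderiv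
    rw [ContinuousLinearMap.comp_id] at h3
    exact h3

/-- The norm of iterated derivatives of a reflected translate. -/
lemma norm_iteratedFDeriv_reflect (f : E → F) (hf : ContDiff ℝ ((⊤ : ℕ∞) : WithTop ℕ∞) f) (x z : E) (m : ℕ) :
    ‖iteratedFDeriv ℝ m (fun w => f (x - w)) z‖ = ‖iteratedFDeriv ℝ m f (x - z)‖ := by
  have hcomp : (fun w => f (x - w)) =
      (fun w => f (x + w)) ∘ ⇑(LinearIsometryEquiv.neg ℝ (E := E)) := by
    funext w; simp [sub_eq_add_neg]
  rw [hcomp, LinearIsometryEquiv.norm_iteratedFDeriv_comp_right,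
    iteratedFDeriv_comp_const_add f hf x m]
  simp [sub_eq_add_neg]

end Aux

/-- The reflected translate `z ↦ κ (x - z)` of a Schwartz function, as a Schwartz function. -/
def reflectTranslate {n : ℕ} (x : En n) (κ : SchwartzMap (En n) ℝ) : SchwartzMap (En n) ℝ where
  toFun := fun z => κ (x - z)
  smooth' := κ.smooth'.comp (contDiff_const.sub contDiff_id)
  decay' := by
    intro k m
    refine ⟨(1 + ‖x‖) ^ k *
      (2 ^ k * (Finset.Iic (k, m)).sup (fun m => SchwartzMap.seminorm ℝ m.1 m.2) κ), fun z => ?_⟩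
    have hnorm : ‖iteratedFDeriv ℝ m (fun w => (κ : En n → ℝ) (x - w)) z‖ =
        ‖iteratedFDeriv ℝ m (⇑κ) (x - z)‖ :=
      norm_iteratedFDeriv_reflect (⇑κ) κ.smooth' x z m
    have h1 : (1 + ‖z‖) ≤ (1 + ‖x‖) * (1 + ‖x - z‖) := by
      have : ‖z‖ ≤ ‖x‖ + ‖x - z‖ := by
        simpa using norm_sub_le x (x - z)
      nlinarith [norm_nonneg x, norm_nonneg (x - z)]
    have h2 : (1 + ‖x - z‖) ^ k * ‖iteratedFDeriv ℝ m (⇑κ) (x - z)‖ ≤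
        2 ^ k * (Finset.Iic (k, m)).sup (fun m => SchwartzMap.seminorm ℝ m.1 m.2) κ :=
      SchwartzMap.one_add_le_sup_seminorm_apply (m := (k, m)) le_rfl le_rfl κ (x - z)
    have h0 : ‖z‖ ^ k ≤ ((1 + ‖x‖) * (1 + ‖x - z‖)) ^ k := by
      apply pow_le_pow_left₀ (norm_nonneg z)
      calc ‖z‖ ≤ 1 + ‖z‖ := by linarith
        _ ≤ _ := h1
    calc ‖z‖ ^ k * ‖iteratedFDeriv ℝ m (fun w => (κ : En n → ℝ) (x - w)) z‖
        = ‖z‖ ^ k * ‖iteratedFDeriv ℝ m (⇑κ) (x - z)‖ := by rw [hnorm]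
      _ ≤ ((1 + ‖x‖) * (1 + ‖x - z‖)) ^ k * ‖iteratedFDeriv ℝ m (⇑κ) (x - z)‖ := by
          exact mul_le_mul_of_nonneg_right h0 (norm_nonneg _)
      _ = (1 + ‖x‖) ^ k * ((1 + ‖x - z‖) ^ k * ‖iteratedFDeriv ℝ m (⇑κ) (x - z)‖) := by
          rw [mul_pow]; ring
      _ ≤ _ := by
          apply mul_le_mul_of_nonneg_left h2 (by positivity)

@[simp] lemma reflectTranslate_apply {n : ℕ} (x : En n) (κ : SchwartzMap (En n) ℝ) (z : En n) :
    reflectTranslate x κ z = κ (x - z) := rfl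


theorem statement17 (n : ℕ) (hn : 0 < n) (p : ℝ) (hp0 : 0 < p) (hp1 : p ≤ 1)
    (φ : En n → ℝ → ℝ) (hφ : GClass n p φ) :
    ∃ N₀ : ℕ, ∀ N ≥ N₀, ∀ κ : SchwartzMap (En n) ℝ,
      ∃ C : ℝ, 0 < C ∧
        ∀ f : TempDist n, hMorrey n p φ N f ≠ ⊤ →
          ENNReal.ofReal |f κ| ≤ ENNReal.ofReal C * hMorrey n p φ N f := by
  obtain ⟨Cφ, hφpos, -, -, -⟩ := hφ
  refine ⟨0, fun N _ κ => ?_⟩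
  -- the Schwartz seminorm bound for κ
  set S : ℝ := (Finset.Iic ((N : ℕ), (N : ℕ))).sup (fun m => SchwartzMap.seminorm ℝ m.1 m.2) κ
    with hS_def
  have hS : 0 ≤ S := apply_nonneg _ κ
  set Y : ℝ := (1 + (n : ℝ)) ^ N * (2 ^ N * S + 1) with hY_def
  have hY : 0 < Y := by positivity
  set A : ℝ := ((N : ℝ) + 1) * Y with hA_def
  have hA : 0 < A := by positivity
  have hφ01 : 0 < φ 0 1 := hφpos 0 1 one_pos
  refine ⟨A * φ 0 1, by positivity, fun f _ => ?_⟩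
  -- describe the unit cube as a preimage
  have he : cube n (0 : En n) 1 = ((MeasurableEquiv.toLp 2 (Fin n → ℝ)).symm) ⁻¹'
      (Set.univ.pi fun _ : Fin n => Set.Icc (-(1/2) : ℝ) (1/2)) := by
    ext y
    have hei : ∀ i, ((MeasurableEquiv.toLp 2 (Fin n → ℝ)).symm) y i = y i := fun _ => rfl
    simp only [cube, Set.mem_setOf_eq, Set.mem_preimage, Set.mem_pi, Set.mem_univ,
      Set.mem_Icc, forall_const, hei]
    refine forall_congr' fun i => ?_
    have h0 : (0 : En n) i = 0 := rfl
    rw [h0, sub_zero, abs_le]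
  have hvol : volume (cube n (0 : En n) 1) = 1 := by
    rw [he, (EuclideanSpace.volume_preserving_symm_measurableEquiv_toLp (Fin n)).measure_preimage_equiv,
      volume_pi_pi]
    simp [Real.volume_Icc]
    norm_num
  have hcube_meas : MeasurableSet (cube n (0 : En n) 1) := by
    rw [he]
    exact ((MeasurableEquiv.toLp 2 (Fin n → ℝ)).symm).measurable
      (MeasurableSet.univ_pi fun _ => measurableSet_Icc)
  set K : ℝ≥0∞ := ENNReal.ofReal (A⁻¹ * |f κ|) with hK_def
  -- grand maximal lower bound on the unit cube
  have hgm : ∀ x ∈ cube n (0 : En n) 1, K ≤ grandMax n N f x := by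
    intro x hxcube
    have hxnorm : ‖x‖ ≤ (n : ℝ) := by
      have hsum : ∑ i, ‖x i‖ ^ 2 ≤ (n : ℝ) ^ 2 := by
        have h1 : ∀ i : Fin n, ‖x i‖ ^ 2 ≤ (1 / 2 : ℝ) ^ 2 := by
          intro i
          have := hxcube i
          have h0 : (0 : En n) i = 0 := rfl
          rw [h0, sub_zero] at this
          have : ‖x i‖ ≤ 1 / 2 := by rwa [Real.norm_eq_abs]
          nlinarith [norm_nonneg (x i)]
        calc ∑ i, ‖x i‖ ^ 2 ≤ ∑ _i : Fin n, (1 / 2 : ℝ) ^ 2 := Finset.sum_le_sum fun i _ => h1 i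
          _ = (n : ℝ) * ((1 / 2 : ℝ) ^ 2) := by
              rw [Finset.sum_const, Finset.card_univ, Fintype.card_fin, nsmul_eq_mul]
          _ ≤ (n : ℝ) ^ 2 := by
              have hn1 : (1 : ℝ) ≤ (n : ℝ) := by exact_mod_cast hn
              nlinarith
      rw [EuclideanSpace.norm_eq]
      calc Real.sqrt (∑ i, ‖x i‖ ^ 2) ≤ Real.sqrt ((n : ℝ) ^ 2) := Real.sqrt_le_sqrt hsum
        _ = (n : ℝ) := Real.sqrt_sq (Nat.cast_nonneg n)
    set ψx : SchwartzMap (En n) ℝ := A⁻¹ • reflectTranslate x κ with hψx_def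
    have hψx_coe : ⇑ψx = A⁻¹ • ⇑(reflectTranslate x κ) := by
      funext w; exact SchwartzMap.smul_apply _ _ _
    -- pN bound
    have hψ : pN n N ψx ≤ 1 := by
      unfold pN
      have hbound : ∀ m ∈ Finset.range (N + 1),
          (⨆ z : En n, ENNReal.ofReal ((1 + ‖z‖) ^ N * ‖iteratedFDeriv ℝ m (⇑ψx) z‖)) ≤
            ENNReal.ofReal (1 / ((N : ℝ) + 1)) := by
        intro m hm
        have hmN : m ≤ N := Nat.lt_succ_iff.mp (Finset.mem_range.mp hm)
        refine iSup_le fun z => ENNReal.ofReal_le_ofReal ?_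
        have hsm : ContDiff ℝ (m : ℕ∞) ⇑(reflectTranslate x κ) := (reflectTranslate x κ).smooth _
        rw [hψx_coe, iteratedFDeriv_const_smul_apply hsm.contDiffAt, norm_smul]
        have hrefl : ‖iteratedFDeriv ℝ m ⇑(reflectTranslate x κ) z‖ =
            ‖iteratedFDeriv ℝ m (⇑κ) (x - z)‖ := by
          have : ⇑(reflectTranslate x κ) = fun w => κ (x - w) := rfl
          rw [this]
          exact norm_iteratedFDeriv_reflect (⇑κ) κ.smooth' x z m
        rw [hrefl]
        have h1 : (1 + ‖z‖) ≤ (1 + ‖x‖) * (1 + ‖x - z‖) := by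
          have : ‖z‖ ≤ ‖x‖ + ‖x - z‖ := by simpa using norm_sub_le x (x - z)
          nlinarith [norm_nonneg x, norm_nonneg (x - z)]
        have h2 : (1 + ‖x - z‖) ^ N * ‖iteratedFDeriv ℝ m (⇑κ) (x - z)‖ ≤ 2 ^ N * S :=
          SchwartzMap.one_add_le_sup_seminorm_apply (m := ((N : ℕ), (N : ℕ))) le_rfl hmN κ (x - z)
        have h3 : (1 + ‖z‖) ^ N ≤ (1 + (n : ℝ)) ^ N * (1 + ‖x - z‖) ^ N := by
          rw [← mul_pow]
          apply pow_le_pow_left₀ (by positivity)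
          calc (1 + ‖z‖) ≤ (1 + ‖x‖) * (1 + ‖x - z‖) := h1
            _ ≤ (1 + (n : ℝ)) * (1 + ‖x - z‖) := by
                apply mul_le_mul_of_nonneg_right (by linarith) (by positivity)
        have h4 : (1 + ‖z‖) ^ N * ‖iteratedFDeriv ℝ m (⇑κ) (x - z)‖ ≤
            (1 + (n : ℝ)) ^ N * (2 ^ N * S) := by
          calc (1 + ‖z‖) ^ N * ‖iteratedFDeriv ℝ m (⇑κ) (x - z)‖
              ≤ ((1 + (n : ℝ)) ^ N * (1 + ‖x - z‖) ^ N) * ‖iteratedFDeriv ℝ m (⇑κ) (x - z)‖ :=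
                mul_le_mul_of_nonneg_right h3 (norm_nonneg _)
            _ = (1 + (n : ℝ)) ^ N * ((1 + ‖x - z‖) ^ N * ‖iteratedFDeriv ℝ m (⇑κ) (x - z)‖) := by
                ring
            _ ≤ (1 + (n : ℝ)) ^ N * (2 ^ N * S) :=
                mul_le_mul_of_nonneg_left h2 (by positivity)
        have hAinv : ‖A⁻¹‖ = A⁻¹ := by
          rw [Real.norm_eq_abs, abs_of_pos (inv_pos.2 hA)]
        calc (1 + ‖z‖) ^ N * (‖A⁻¹‖ * ‖iteratedFDeriv ℝ m (⇑κ) (x - z)‖)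
            = A⁻¹ * ((1 + ‖z‖) ^ N * ‖iteratedFDeriv ℝ m (⇑κ) (x - z)‖) := by
              rw [hAinv]; ring
          _ ≤ A⁻¹ * ((1 + (n : ℝ)) ^ N * (2 ^ N * S)) := by
              apply mul_le_mul_of_nonneg_left h4 (inv_pos.2 hA).le
          _ ≤ A⁻¹ * Y := by
              apply mul_le_mul_of_nonneg_left ?_ (inv_pos.2 hA).le
              rw [hY_def]
              apply mul_le_mul_of_nonneg_left (by linarith) (by positivity)
          _ = 1 / ((N : ℝ) + 1) := by
              rw [hA_def, mul_inv, mul_assoc, inv_mul_cancel₀ hY.ne', mul_one, one_div]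
      calc ∑ m ∈ Finset.range (N + 1),
            ⨆ z : En n, ENNReal.ofReal ((1 + ‖z‖) ^ N * ‖iteratedFDeriv ℝ m (⇑ψx) z‖)
          ≤ ∑ _m ∈ Finset.range (N + 1), ENNReal.ofReal (1 / ((N : ℝ) + 1)) :=
            Finset.sum_le_sum hbound
        _ = ((N + 1 : ℕ) : ℝ≥0∞) * ENNReal.ofReal (1 / ((N : ℝ) + 1)) := by
            rw [Finset.sum_const, Finset.card_range, nsmul_eq_mul]
        _ = 1 := by
            rw [← ENNReal.ofReal_natCast (N + 1), ← ENNReal.ofReal_mul (by positivity)]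
            rw [show ((N + 1 : ℕ) : ℝ) * (1 / ((N : ℝ) + 1)) = 1 by push_cast; field_simp]
            exact ENNReal.ofReal_one
    -- the test function condition
    have hη : ∀ y, (A⁻¹ • κ) y = ((1 : ℝ) ^ n)⁻¹ * ψx ((1 : ℝ)⁻¹ • (x - y)) := by
      intro y
      simp only [one_pow, inv_one, one_mul, one_smul]
      rw [hψx_def]
      rw [SchwartzMap.smul_apply, SchwartzMap.smul_apply, reflectTranslate_apply]
      rw [show x - (x - y) = y from sub_sub_cancel x y]
    have hfval : |f (A⁻¹ • κ)| = A⁻¹ * |f κ| := by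
      rw [_root_.map_smul, smul_eq_mul, abs_mul, abs_of_pos (inv_pos.2 hA)]
    unfold grandMax
    refine le_iSup_of_le ψx (le_iSup_of_le hψ (le_iSup_of_le (1 : ℝ)
      (le_iSup_of_le one_pos (le_iSup_of_le (A⁻¹ • κ) (le_iSup_of_le hη ?_)))))
    rw [hfval]
  -- integral lower bound
  have hint : K ^ p ≤ ∫⁻ y in cube n (0 : En n) 1, grandMax n N f y ^ p := by
    calc K ^ p = K ^ p * volume (cube n (0 : En n) 1) := by rw [hvol, mul_one]
      _ = ∫⁻ _y in cube n (0 : En n) 1, K ^ p := (setLIntegral_const _ _).symm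
      _ ≤ ∫⁻ y in cube n (0 : En n) 1, grandMax n N f y ^ p :=
          setLIntegral_mono' hcube_meas fun y hy => ENNReal.rpow_le_rpow (hgm y hy) hp0.le
  -- Morrey lower bound via the term at (0, 1)
  have hterm : (ENNReal.ofReal (φ 0 1))⁻¹ * K ≤ hMorrey n p φ N f := by
    unfold hMorrey morrey
    refine le_iSup_of_le (0 : En n) (le_iSup_of_le (1 : ℝ) (le_iSup_of_le one_pos ?_))
    apply mul_le_mul_right
    have hKrw : K = (K ^ p) ^ (1 / p) := by
      rw [← ENNReal.rpow_mul, mul_one_div, div_self hp0.ne', ENNReal.rpow_one]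
    rw [hKrw]
    apply ENNReal.rpow_le_rpow ?_ (by positivity)
    calc K ^ p ≤ ∫⁻ y in cube n (0 : En n) 1, grandMax n N f y ^ p := hint
      _ = (ENNReal.ofReal ((1 : ℝ) ^ n))⁻¹ * ∫⁻ y in cube n (0 : En n) 1,
          grandMax n N f y ^ p := by
            rw [one_pow, ENNReal.ofReal_one, inv_one, one_mul]
  -- conclude
  have hfinal : ENNReal.ofReal (A * φ 0 1) * ((ENNReal.ofReal (φ 0 1))⁻¹ * K) =
      ENNReal.ofReal |f κ| := by
    rw [ENNReal.ofReal_mul hA.le, mul_assoc, ← mul_assoc (ENNReal.ofReal (φ 0 1)),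
      ENNReal.mul_inv_cancel (ENNReal.ofReal_pos.2 hφ01).ne' ENNReal.ofReal_ne_top, one_mul,
      hK_def, ← ENNReal.ofReal_mul hA.le, mul_inv_cancel_left₀ hA.ne']
  calc ENNReal.ofReal |f κ| = ENNReal.ofReal (A * φ 0 1) * ((ENNReal.ofReal (φ 0 1))⁻¹ * K) :=
        hfinal.symm
    _ ≤ ENNReal.ofReal (A * φ 0 1) * hMorrey n p φ N f := mul_le_mul_right hterm _


end
end
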